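/- Suppose f ∈ W^1_2(ℝ), a > 1, and b ≥ e. Then ∫_1^b |f(t) − f(at)|² dt ≤ 7 a b² (a−1)² ‖f‖²_{W^1_2(ℝ)}. (In fact the proof gives the bound with (log a)² in place of (a−1)², which is stronger since log a ≤ a − 1.) -/

import Mathlib

open MeasureTheory Set

lemma sq_intervalIntegral_le (g : ℝ → ℝ) (t u : ℝ) (htu : t ≤ u)
    (hg : MemLp g 2 (volume : Measure ℝ)) :
    (∫ s in t..u, g s) ^ 2 ≤ (u - t) * ∫ s in t..u, (g s) ^ 2 := by
  set μ := volume.restrict (Ioc t u) with hμ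
  have hμfin : IsFiniteMeasure μ := by rw [hμ]; infer_instance
  have hgr : MemLp g 2 μ := hg.restrict _
  have h1 : MemLp (fun _ : ℝ => (1:ℝ)) 2 μ := memLp_const 1
  have habs : MemLp (fun s => |g s|) 2 μ := by
    simpa [Real.norm_eq_abs] using hgr.norm
  have hconj : (2:ℝ).HolderConjugate 2 := Real.holderConjugate_iff.mpr ⟨one_lt_two, by norm_num⟩
  have hH := integral_mul_le_Lp_mul_Lq_of_nonneg (μ := μ) hconj
    (f := fun s => |g s|) (g := fun _ => (1:ℝ))
    (Filter.Eventually.of_forall fun x => abs_nonneg _)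
    (Filter.Eventually.of_forall fun x => zero_le_one)
    (by simpa using habs) (by simpa using h1)
  simp only [mul_one] at hH
  have hμuniv : ∫ _ : ℝ, (1:ℝ) ∂μ = u - t := by
    simp [hμ, Real.volume_Ioc, ENNReal.toReal_ofReal (sub_nonneg.mpr htu), htu]
  have e1 : ∫ s, |g s| ^ (2:ℝ) ∂μ = ∫ s, (g s) ^ 2 ∂μ :=
    integral_congr_ae (Filter.Eventually.of_forall fun s => by
      have h : |g s| ^ (2:ℝ) = |g s| ^ (2:ℕ) := by
        rw [show ((2:ℝ)) = ((2:ℕ):ℝ) by norm_num, Real.rpow_natCast]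
      simp [h, sq_abs])
  have e2 : ∫ _ : ℝ, (1:ℝ) ^ (2:ℝ) ∂μ = u - t := by
    simpa [Real.one_rpow] using hμuniv
  rw [e1, e2] at hH
  have hint_nonneg : (0:ℝ) ≤ ∫ s, (g s)^2 ∂μ := integral_nonneg fun s => sq_nonneg _
  have habsle : |∫ s in t..u, g s| ≤ ∫ s, |g s| ∂μ := by
    rw [intervalIntegral.integral_of_le htu]
    simpa [Real.norm_eq_abs] using norm_integral_le_integral_norm (μ := μ) g
  have hsq : (∫ s in t..u, g s) ^ 2 ≤ (∫ s, |g s| ∂μ) ^ 2 := by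
    rw [← sq_abs]
    exact pow_le_pow_left₀ (abs_nonneg _) habsle 2
  have hrhs : ((∫ s, (g s)^2 ∂μ) ^ ((1:ℝ)/2) * (u - t) ^ ((1:ℝ)/2)) ^ 2
      = (u - t) * ∫ s, (g s)^2 ∂μ := by
    rw [mul_pow, ← Real.rpow_natCast ((∫ s, (g s)^2 ∂μ) ^ ((1:ℝ)/2)) 2,
      ← Real.rpow_natCast ((u - t) ^ ((1:ℝ)/2)) 2,
      ← Real.rpow_mul hint_nonneg, ← Real.rpow_mul (sub_nonneg.mpr htu)]
    norm_num [mul_comm]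
  calc (∫ s in t..u, g s) ^ 2 ≤ (∫ s, |g s| ∂μ) ^ 2 := hsq
    _ ≤ ((∫ s, (g s)^2 ∂μ) ^ ((1:ℝ)/2) * (u - t) ^ ((1:ℝ)/2)) ^ 2 := by
        apply pow_le_pow_left₀ (integral_nonneg fun s => abs_nonneg _) hH
    _ = (u - t) * ∫ s, (g s)^2 ∂μ := hrhs
    _ = (u - t) * ∫ s in t..u, (g s)^2 := by rw [intervalIntegral.integral_of_le htu]

/-- Dilation estimate for Sobolev functions: for `f ∈ W¹₂(ℝ)`, `a > 1`, `b ≥ e`,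
`∫_1^b |f(t) - f(at)|² dt ≤ 7 a b² (a-1)² ‖f‖²_{W¹₂(ℝ)}`. -/
theorem dilation_estimate (f f' : ℝ → ℝ)
    (hderiv : ∀ x, HasDerivAt f (f' x) x)
    (hf2 : Integrable (fun x => (f x) ^ 2))
    (hf'2 : Integrable (fun x => (f' x) ^ 2))
    (a b : ℝ) (ha : 1 < a) (hb : Real.exp 1 ≤ b) :
    ∫ t in (1:ℝ)..b, (f t - f (a * t)) ^ 2 ≤
      7 * a * b ^ 2 * (a - 1) ^ 2 * ((∫ x, (f x) ^ 2) + ∫ x, (f' x) ^ 2) := by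
  have ha0 : (0:ℝ) < a := lt_trans one_pos ha
  have hexp : (2.7182818283 : ℝ) < Real.exp 1 := Real.exp_one_gt_d9
  have hb2 : (2:ℝ) < b := by linarith
  have hb1 : (1:ℝ) < b := by linarith
  have hb0 : (0:ℝ) < b := by linarith
  have hf'eq : f' = deriv f := funext fun x => ((hderiv x).deriv).symm
  have hmeasf' : StronglyMeasurable f' := hf'eq ▸ stronglyMeasurable_deriv f
  have hmem2 : MemLp f' 2 (volume : Measure ℝ) :=
    (memLp_two_iff_integrable_sq hmeasf'.aestronglyMeasurable).mpr hf'2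
  have hcontf : Continuous f := by
    rw [continuous_iff_continuousAt]; exact fun x => (hderiv x).continuousAt
  set I := ∫ x, (f' x)^2 with hIdef
  set J := ∫ x, (f x)^2 with hJdef
  have hI0 : 0 ≤ I := integral_nonneg fun x => sq_nonneg _
  have hJ0 : 0 ≤ J := integral_nonneg fun x => sq_nonneg _
  set F : ℝ → ℝ := fun x => ∫ s in Set.Iic x, (f' s)^2 with hFdef
  have hF_mono : Monotone F := fun x y hxy =>
    setIntegral_mono_set hf'2.integrableOn
      (Filter.Eventually.of_forall fun s => sq_nonneg _)
      (HasSubset.Subset.eventuallyLE (Set.Iic_subset_Iic.mpr hxy))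
  have hF_nonneg : ∀ x, 0 ≤ F x := fun x =>
    setIntegral_nonneg measurableSet_Iic fun s _ => sq_nonneg _
  have hF_le : ∀ x, F x ≤ I := fun x =>
    setIntegral_le_integral hf'2 (Filter.Eventually.of_forall fun s => sq_nonneg _)
  have hFdiffint : ∀ u v : ℝ, F v - F u = ∫ s in u..v, (f' s)^2 := fun u v =>
    intervalIntegral.integral_Iic_sub_Iic hf'2.integrableOn hf'2.integrableOn
  have hFa_mono : Monotone (fun t => F (a*t)) :=
    hF_mono.comp (monotone_mul_left_of_nonneg ha0.le)
  have hFint : ∀ u v : ℝ, IntervalIntegrable F volume u v := fun u v =>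
    hF_mono.intervalIntegrable
  have hFaint : ∀ u v : ℝ, IntervalIntegrable (fun t => F (a*t)) volume u v := fun u v =>
    hFa_mono.intervalIntegrable
  -- pointwise bound
  have key : ∀ t ∈ Set.Icc (1:ℝ) b, (f t - f (a*t))^2 ≤ b*(a-1) * (F (a*t) - F t) := by
    intro t ht
    have ht1 : 1 ≤ t := ht.1
    have htb : t ≤ b := ht.2
    have hta : t ≤ a * t := by nlinarith
    have hint : IntervalIntegrable f' volume t (a*t) := by
      rw [intervalIntegrable_iff]
      have hr : MemLp f' 2 (volume.restrict (Set.uIoc t (a*t))) := hmem2.restrict _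
      haveI : IsFiniteMeasure (volume.restrict (Set.uIoc t (a*t))) := by
        rw [Set.uIoc]; infer_instance
      exact memLp_one_iff_integrable.mp (hr.mono_exponent (by norm_num))
    have heq : ∫ s in t..(a*t), f' s = f (a*t) - f t :=
      intervalIntegral.integral_eq_sub_of_hasDerivAt (fun s _ => hderiv s) hint
    have hCS := sq_intervalIntegral_le f' t (a*t) hta hmem2
    have hrw : (f t - f (a*t))^2 = (∫ s in t..(a*t), f' s)^2 := by rw [heq]; ring
    rw [hrw]
    rw [← hFdiffint t (a*t)] at hCS
    have hFd0 : 0 ≤ F (a*t) - F t := sub_nonneg.mpr (hF_mono hta)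
    have h2 : a*t - t ≤ b*(a-1) := by nlinarith
    calc (∫ s in t..(a*t), f' s)^2 ≤ (a*t - t) * (F (a*t) - F t) := hCS
      _ ≤ b*(a-1) * (F (a*t) - F t) := mul_le_mul_of_nonneg_right h2 hFd0
  have hint1 : IntervalIntegrable (fun t => (f t - f (a*t))^2) volume 1 b :=
    ((hcontf.sub (hcontf.comp (continuous_const.mul continuous_id))).pow 2).intervalIntegrable 1 b
  have hint2 : IntervalIntegrable (fun t => b*(a-1) * (F (a*t) - F t)) volume 1 b :=
    (((hFaint 1 b).sub (hFint 1 b)).const_mul _)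
  have step1 : ∫ t in (1:ℝ)..b, (f t - f (a*t))^2
      ≤ ∫ t in (1:ℝ)..b, b*(a-1) * (F (a*t) - F t) :=
    intervalIntegral.integral_mono_on hb1.le hint1 hint2 key
  set D := (∫ t in (1:ℝ)..b, F (a*t)) - ∫ t in (1:ℝ)..b, F t with hDdef
  have step2 : ∫ t in (1:ℝ)..b, b*(a-1) * (F (a*t) - F t) = b*(a-1) * D := by
    rw [hDdef, ← intervalIntegral.integral_sub (hFaint 1 b) (hFint 1 b),
      ← intervalIntegral.integral_const_mul]
  have hD_le : D ≤ b*(a-1)*I := by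
    rcases le_or_gt a b with hab | hab
    · -- a ≤ b
      have hcomp : ∫ t in (1:ℝ)..b, F (a*t) = a⁻¹ • ∫ x in (a*1)..(a*b), F x :=
        intervalIntegral.integral_comp_mul_left F (ne_of_gt ha0)
      have h1 : (∫ x in a..b, F x) + ∫ x in b..(a*b), F x = ∫ x in a..(a*b), F x :=
        intervalIntegral.integral_add_adjacent_intervals (hFint a b) (hFint b (a*b))
      have hbab : b ≤ a*b := by nlinarith
      have h2 : ∫ x in b..(a*b), F x ≤ ∫ x in b..(a*b), (I:ℝ) := by
        apply intervalIntegral.integral_mono_on hbab (hFint b _) intervalIntegrable_const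
        exact fun x _ => hF_le x
      have h2' : ∫ x in b..(a*b), (I:ℝ) = (a*b - b) * I := by
        rw [intervalIntegral.integral_const, smul_eq_mul]
      have h3 : 0 ≤ ∫ x in a..b, F x :=
        intervalIntegral.integral_nonneg hab (fun x _ => hF_nonneg x)
      have h4 : ∫ x in a..b, F x ≤ ∫ t in (1:ℝ)..b, F t := by
        have hadd : (∫ x in (1:ℝ)..a, F x) + ∫ x in a..b, F x = ∫ x in (1:ℝ)..b, F x :=
          intervalIntegral.integral_add_adjacent_intervals (hFint 1 a) (hFint a b)
        have h5 : 0 ≤ ∫ x in (1:ℝ)..a, F x :=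
          intervalIntegral.integral_nonneg ha.le (fun x _ => hF_nonneg x)
        linarith
      have hainv1 : a⁻¹ ≤ 1 := by
        rw [inv_le_one₀ ha0]; exact ha.le
      have hainv0 : 0 < a⁻¹ := inv_pos.mpr ha0
      rw [hDdef, hcomp, smul_eq_mul, mul_one]
      have hX : a⁻¹ * (∫ x in a..b, F x) ≤ ∫ x in a..b, F x := by nlinarith
      have hY : a⁻¹ * (∫ x in b..(a*b), F x) ≤ a⁻¹ * ((a*b - b) * I) := by
        apply mul_le_mul_of_nonneg_left _ hainv0.le
        linarith [h2, h2']
      have hZ : a⁻¹ * ((a*b - b) * I) ≤ b*(a-1)*I := by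
        have h0 : 0 ≤ (a*b - b) * I := mul_nonneg (by nlinarith) hI0
        linarith [mul_le_mul_of_nonneg_right hainv1 h0]
      have hsplit : ∫ x in a..(a*b), F x = (∫ x in a..b, F x) + ∫ x in b..(a*b), F x := h1.symm
      rw [hsplit, mul_add]
      linarith
    · -- b < a : crude bound
      have hcr : ∀ t ∈ Set.Icc (1:ℝ) b, F (a*t) ≤ I := fun t _ => hF_le _
      have h6 : ∫ t in (1:ℝ)..b, F (a*t) ≤ ∫ t in (1:ℝ)..b, (I:ℝ) :=
        intervalIntegral.integral_mono_on hb1.le (hFaint 1 b) intervalIntegrable_const hcr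
      have h6' : ∫ t in (1:ℝ)..b, (I:ℝ) = (b - 1) * I := by
        rw [intervalIntegral.integral_const, smul_eq_mul]
      have h7 : 0 ≤ ∫ t in (1:ℝ)..b, F t :=
        intervalIntegral.integral_nonneg hb1.le (fun x _ => hF_nonneg x)
      have hc : (b - 1) ≤ b*(a-1) := by nlinarith
      have h8 : (b - 1) * I ≤ b*(a-1)*I := mul_le_mul_of_nonneg_right hc hI0
      rw [hDdef]; linarith
  have hba0 : 0 ≤ b*(a-1) := by nlinarith
  calc ∫ t in (1:ℝ)..b, (f t - f (a*t))^2
      ≤ b*(a-1) * D := by rw [← step2]; exact step1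
    _ ≤ b*(a-1) * (b*(a-1)*I) := mul_le_mul_of_nonneg_left hD_le hba0
    _ ≤ 7 * a * b ^ 2 * (a - 1) ^ 2 * (J + I) := by
        nlinarith [mul_nonneg (mul_nonneg (sq_nonneg b) (sq_nonneg (a-1))) hJ0,
          mul_nonneg (mul_nonneg (sq_nonneg b) (sq_nonneg (a-1))) hI0]
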